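/- Let G = (Φ, Σ, R, 𝒮) be a regular tree grammar and G' its subset-construction determinization with starting set 𝒮' = { A' : A' ∩ 𝒮 ≠ ∅ }. Then L(G) = L(G'). -/
import Mathlib


structure Rule (N : Type) (α : Type) where
  lhs : N
  sym : α
  rhs : List N
deriving DecidableEq

inductive RTree (α : Type) where
  | node : α → List (RTree α) → RTree α

def RTree.size {α : Type} : RTree α → Nat
  | .node _ ys => 1 + (ys.attach.map (fun y => RTree.size y.1)).sum
decreasing_by have := List.sizeOf_lt_of_mem y.2; simp only [RTree.node.sizeOf_spec]; omega

def RTree.children {α : Type} : RTree α → List (RTree α)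
  | .node _ ys => ys

def RTree.root {α : Type} : RTree α → α
  | .node x _ => x

def RTree.dfs {α : Type} : RTree α → List (RTree α)
  | .node x ys => (ys.attach.map (fun y => RTree.dfs y.1)).flatten ++ [.node x ys]
decreasing_by have := List.sizeOf_lt_of_mem y.2; simp only [RTree.node.sizeOf_spec]; omega

inductive GenList {N α : Type} (R : Set (Rule N α)) :
    List (Rule N α) → List N → List (RTree α) → Prop where
  | nil : GenList R [] [] []
  | step {r : Rule N α} {rs : List (Rule N α)} {stack : List N}
      {ys ts : List (RTree α)} :
      r ∈ R →
      ys.length = r.rhs.length →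
      GenList R rs (r.rhs ++ stack) (ys ++ ts) →
      GenList R (r :: rs) (r.lhs :: stack) (RTree.node r.sym ys :: ts)

def GenSeq {N α : Type} (R : Set (Rule N α)) (rs : List (Rule N α))
    (A : N) (t : RTree α) : Prop :=
  GenList R rs [A] [t]

def Lang {N α : Type} (R : Set (Rule N α)) (A : N) : Set (RTree α) :=
  {t | ∃ rs, GenSeq R rs A t}

def LangN {N α : Type} (R : Set (Rule N α)) (A : N) (n : Nat) : Set (RTree α) :=
  {t ∈ Lang R A | t.size ≤ n}

def Deterministic {N α : Type} (R : Set (Rule N α)) : Prop :=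
  ∀ r ∈ R, ∀ r' ∈ R, r.sym = r'.sym → r.rhs = r'.rhs → r = r'

def parse {N α : Type} [DecidableEq N] [DecidableEq α] (R : List (Rule N α)) :
    RTree α → Option (N × List (Rule N α))
  | RTree.node x ys => do
    let res ← ys.attach.mapM (fun y => parse R y.1)
    match R.find? (fun r => r.sym == x && r.rhs == res.map Prod.fst) with
    | some r => some (r.lhs, r :: (res.map Prod.snd).flatten)
    | none => none
decreasing_by have := List.sizeOf_lt_of_mem y.2; simp only [RTree.node.sizeOf_spec]; omega

theorem genlist_length {N α : Type} {R : Set (Rule N α)} {rs : List (Rule N α)}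
    {stack : List N} {ts : List (RTree α)}
    (h : GenList R rs stack ts) : stack.length = ts.length := by
  induction h with
  | nil => rfl
  | step hr hlen hg ih =>
    simp only [List.length_append] at ih
    simp only [List.length_cons]
    omega

theorem genlist_append {N α : Type} {R : Set (Rule N α)} {rs1 rs2 : List (Rule N α)}
    {s1 s2 : List N} {t1 t2 : List (RTree α)}
    (h1 : GenList R rs1 s1 t1) (h2 : GenList R rs2 s2 t2) :
    GenList R (rs1 ++ rs2) (s1 ++ s2) (t1 ++ t2) := by
  induction h1 with
  | nil => simpa using h2
  | step hr hlen hg ih =>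
    simp only [List.cons_append]
    exact GenList.step hr hlen (by simpa [List.append_assoc] using ih)

theorem genlist_split {N α : Type} {R : Set (Rule N α)} {rs : List (Rule N α)}
    {stack : List N} {ts : List (RTree α)}
    (h : GenList R rs stack ts) :
    ∀ s1 s2 : List N, stack = s1 ++ s2 →
    ∃ rs1 rs2 t1 t2, rs = rs1 ++ rs2 ∧ ts = t1 ++ t2 ∧
      GenList R rs1 s1 t1 ∧ GenList R rs2 s2 t2 := by
  induction h with
  | nil =>
    intro s1 s2 he
    obtain ⟨h1, h2⟩ := List.append_eq_nil_iff.mp he.symm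
    subst h1; subst h2
    exact ⟨[], [], [], [], rfl, rfl, GenList.nil, GenList.nil⟩
  | @step r rs stack ys ts hr hlen hg ih =>
    intro s1 s2 he
    cases s1 with
    | nil =>
      exact ⟨[], r :: rs, [], RTree.node r.sym ys :: ts, rfl, rfl, GenList.nil,
        by rw [← List.nil_append s2, ← he]; exact GenList.step hr hlen hg⟩
    | cons C s1' =>
      simp only [List.cons_append, List.cons.injEq] at he
      obtain ⟨hC, hst⟩ := he
      obtain ⟨rs1, rs2, t1, t2, hrs, hts, hg1, hg2⟩ :=
        ih (r.rhs ++ s1') s2 (by rw [hst, List.append_assoc])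
      have hlen1 : t1.length = r.rhs.length + s1'.length := by
        have := genlist_length hg1; simpa using this.symm
      have hys : ys.length ≤ t1.length := by omega
      rcases List.append_eq_append_iff.mp hts with ⟨v, hv1, hv2⟩ | ⟨v, hv1, hv2⟩
      · refine ⟨r :: rs1, rs2, RTree.node r.sym ys :: v, t2, by simp [hrs], by simp [hv2],
          ?_, hg2⟩
        rw [← hC]
        exact GenList.step hr hlen (by rw [← hv1]; exact hg1)
      · -- ys = t1 ++ v, with ys.length ≤ t1.length so v = []
        have hvnil : v = [] := by
          have : ys.length = t1.length + v.length := by rw [hv1]; simp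
          have : v.length = 0 := by omega
          exact List.length_eq_zero_iff.mp this
        subst hvnil
        simp only [List.append_nil] at hv1
        refine ⟨r :: rs1, rs2, RTree.node r.sym ys :: [], t2, by simp [hrs],
          by simp [hv2], ?_, hg2⟩
        rw [← hC]
        exact GenList.step hr hlen (by rw [List.append_nil, hv1]; simpa using hg1)

theorem genlist_forall2 {N α : Type} {R : Set (Rule N α)} :
    ∀ {Bs : List N} {rs : List (Rule N α)} {ts : List (RTree α)},
      GenList R rs Bs ts → List.Forall₂ (fun B t => t ∈ Lang R B) Bs ts := by
  intro Bs
  induction Bs with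
  | nil =>
    intro rs ts h
    have := genlist_length h
    simp only [List.length_nil] at this
    rw [(List.length_eq_zero_iff.mp this.symm)]
    exact List.Forall₂.nil
  | cons B Bs ih =>
    intro rs ts h
    obtain ⟨rs1, rs2, t1, t2, hrs, hts, hg1, hg2⟩ := genlist_split h [B] Bs rfl
    have h1 : t1.length = 1 := by have := genlist_length hg1; simpa using this.symm
    obtain ⟨t, ht⟩ := List.length_eq_one_iff.mp h1
    subst ht; subst hts
    exact List.Forall₂.cons ⟨rs1, hg1⟩ (ih hg2)

theorem forall2_genlist {N α : Type} {R : Set (Rule N α)} {Bs : List N}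
    {ts : List (RTree α)}
    (h : List.Forall₂ (fun B t => t ∈ Lang R B) Bs ts) :
    ∃ rs, GenList R rs Bs ts := by
  induction h with
  | nil => exact ⟨[], GenList.nil⟩
  | cons hbt _ ih =>
    obtain ⟨rs1, h1⟩ := hbt
    obtain ⟨rs2, h2⟩ := ih
    exact ⟨rs1 ++ rs2, genlist_append h1 h2⟩

theorem lang_node_iff {N α : Type} {R : Set (Rule N α)} {A : N} {x : α}
    {ys : List (RTree α)} :
    RTree.node x ys ∈ Lang R A ↔
      ∃ Bs, Rule.mk A x Bs ∈ R ∧ List.Forall₂ (fun B y => y ∈ Lang R B) Bs ys := by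
  constructor
  · rintro ⟨rs, h⟩
    cases h with
    | @step r rs' stack ys' ts hr hlen hg =>
      obtain ⟨l, s, rh⟩ := r
      refine ⟨rh, hr, ?_⟩
      simpa using genlist_forall2 hg
  · rintro ⟨Bs, hr, hf⟩
    obtain ⟨rs, hg⟩ := forall2_genlist hf
    refine ⟨⟨A, x, Bs⟩ :: rs, ?_⟩
    exact GenList.step (r := ⟨A, x, Bs⟩) hr hf.length_eq.symm (by simpa using hg)

theorem RTree.my_ind {α : Type} {P : RTree α → Prop}
    (h : ∀ x ys, (∀ y ∈ ys, P y) → P (RTree.node x ys)) : ∀ t, P t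
  | RTree.node x ys => h x ys (fun y hy => RTree.my_ind h y)
decreasing_by have := List.sizeOf_lt_of_mem hy; simp only [RTree.node.sizeOf_spec]; omega

theorem forall2_map_eq {N α : Type} {R' : Set (Rule (Set N) α)} {f : RTree α → Set N} :
    ∀ {ys : List (RTree α)} {Bs' : List (Set N)},
      (∀ y ∈ ys, ∀ B', y ∈ Lang R' B' → B' = f y) →
      List.Forall₂ (fun B' y => y ∈ Lang R' B') Bs' ys →
      Bs' = ys.map f := by
  intro ys
  induction ys with
  | nil => intro Bs' _ hf; cases hf; rfl
  | cons y ys ih =>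
    intro Bs' hih hf
    cases hf with
    | cons h1 h2 =>
      simp only [List.map_cons, List.cons.injEq]
      exact ⟨hih y (by simp) _ h1, ih (fun z hz B' => hih z (by simp [hz]) B') h2⟩

theorem forall2_mem_right {β γ : Type*} {p : β → γ → Prop} :
    ∀ {l1 : List β} {l2 : List γ}, List.Forall₂ p l1 l2 → ∀ y ∈ l2, ∃ B, p B y := by
  intro l1 l2 h
  induction h with
  | nil => simp
  | cons h1 _ ih =>
    intro y hy
    rcases List.mem_cons.mp hy with h | h
    · exact ⟨_, h ▸ h1⟩
    · exact ih y h

theorem subset_lang {N α : Type} (R : Set (Rule N α)) (R' : Set (Rule (Set N) α))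
    (hR' : ∀ r' : Rule (Set N) α, r' ∈ R' ↔
      (r'.lhs = {A | ∃ Bs : List N, Rule.mk A r'.sym Bs ∈ R ∧
          List.Forall₂ (fun (B : N) (B' : Set N) => B ∈ B') Bs r'.rhs} ∧
        r'.lhs.Nonempty)) :
    ∀ t : RTree α, ∀ A' : Set N,
      t ∈ Lang R' A' ↔ (A' = {A | t ∈ Lang R A} ∧ A'.Nonempty) := by
  intro t
  induction t using RTree.my_ind with
  | h x ys ih =>
    intro A'
    have hset : ∀ Bs' : List (Set N),
        Bs' = ys.map (fun y => {B | y ∈ Lang R B}) →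
        {A | ∃ Bs : List N, Rule.mk A x Bs ∈ R ∧
          List.Forall₂ (fun (B : N) (B' : Set N) => B ∈ B') Bs Bs'}
          = {A | RTree.node x ys ∈ Lang R A} := by
      intro Bs' hBs'
      subst hBs'
      ext A
      simp only [Set.mem_setOf_eq, lang_node_iff, List.forall₂_map_right_iff]
    constructor
    · intro ht
      rw [lang_node_iff] at ht
      obtain ⟨Bs', hr', hf⟩ := ht
      rw [hR'] at hr'
      obtain ⟨hlhs, hne⟩ := hr'
      dsimp only at hlhs hne
      have key : Bs' = ys.map (fun y => {B | y ∈ Lang R B}) :=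
        forall2_map_eq (fun y hy B' hB' => ((ih y hy B').mp hB').1) hf
      refine ⟨?_, hne⟩
      rw [hlhs, key]
      exact hset _ rfl
    · rintro ⟨hA, hne⟩
      obtain ⟨A, hAA⟩ := hne
      have htA : RTree.node x ys ∈ Lang R A := by rw [hA] at hAA; exact hAA
      obtain ⟨Bs, _, hfB⟩ := lang_node_iff.mp htA
      have hnef : ∀ y ∈ ys, ({B | y ∈ Lang R B} : Set N).Nonempty := by
        intro y hy
        obtain ⟨B, hB⟩ := forall2_mem_right hfB y hy
        exact ⟨B, hB⟩
      rw [lang_node_iff]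
      refine ⟨ys.map (fun y => {B | y ∈ Lang R B}), ?_, ?_⟩
      · rw [hR']
        constructor
        · simp only
          rw [hset _ rfl, ← hA]
        · simpa using ⟨A, hAA⟩
      · rw [List.forall₂_map_left_iff, List.forall₂_same]
        intro y hy
        exact (ih y hy _).mpr ⟨rfl, hnef y hy⟩

theorem stmt13 {N alpha : Type} (R : Set (Rule N alpha)) (S : Set N)
    (R' : Set (Rule (Set N) alpha))
    (hR' : ∀ r' : Rule (Set N) alpha, r' ∈ R' ↔
      (r'.lhs = {A | ∃ Bs : List N, Rule.mk A r'.sym Bs ∈ R ∧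
          List.Forall₂ (fun (B : N) (B' : Set N) => B ∈ B') Bs r'.rhs} ∧
        r'.lhs.Nonempty)) :
    (⋃ s ∈ S, Lang R s) =
      ⋃ A' ∈ {A' : Set N | (A' ∩ S).Nonempty}, Lang R' A' := by
  ext t
  simp only [Set.mem_iUnion, Set.mem_setOf_eq, exists_prop]
  constructor
  · rintro ⟨s, hs, ht⟩
    exact ⟨{A | t ∈ Lang R A}, ⟨s, ht, hs⟩,
      (subset_lang R R' hR' t _).mpr ⟨rfl, ⟨s, ht⟩⟩⟩
  · rintro ⟨A', ⟨a, haA, haS⟩, ht⟩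
    obtain ⟨hEq, -⟩ := (subset_lang R R' hR' t A').mp ht
    rw [hEq] at haA
    exact ⟨a, haS, haA⟩
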